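/- Let n ≥ 1 be an integer, N an integer with 0 ≤ N ≤ n−1, and a₁,…,a_N ≥ 0 real numbers. Let U ⊂ ℂⁿ be the open unit polydisk, D = ⋃_{k=1}^N {z_k = 0}, and ψ(z) = log(|z_n|² ∏_{k=1}^N |z_k|^{2a_k}). Fix a continuous g : ℂ^{n−1} → ℝ with compact support contained in {z′ : |z′_i| < 1 for all i, and z′_k ≠ 0 for 1 ≤ k ≤ N}, and let g̃₁ and g̃₂ be two continuous functions ℂⁿ → ℝ, each with compact support disjoint from D, such that g̃ⱼ(z′, 0) = g(z′) for j = 1, 2 and all z′ with z′_k ≠ 0 (1 ≤ k ≤ N). Then limsup_{t→−∞} ∫_{U ∩ {t < ψ < t+1}} g̃₁ e^{−ψ} dλ_{2n} ≤ liminf_{t→−∞} ∫_{U ∩ {t < ψ < t+1}} g̃₂ e^{−ψ} dλ_{2n}. In particular, whenever the two limits exist they are equal, i.e. the limit is independent of the choice of compactly supported continuous extension of g. -/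

import Mathlib

open MeasureTheory Filter Real Topology

private lemma ann_measurable (r₀ r₁ : ℝ) : MeasurableSet {w : ℂ | ‖w‖ ∈ Set.Ioo r₀ r₁} :=
  measurableSet_Ioo.preimage measurable_norm

private lemma ann_vol_ne_top (r₀ r₁ : ℝ) : volume {w : ℂ | ‖w‖ ∈ Set.Ioo r₀ r₁} ≠ ⊤ := by
  have hsub : {w : ℂ | ‖w‖ ∈ Set.Ioo r₀ r₁} ⊆ Metric.ball 0 r₁ := by
    intro w hw
    simpa [Complex.dist_eq] using hw.2
  refine ne_top_of_le_ne_top ?_ (measure_mono hsub)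
  rw [Complex.volume_ball]
  exact ENNReal.mul_ne_top (by simp [ENNReal.pow_ne_top]) ENNReal.coe_ne_top

private lemma ann_integrable {r₀ r₁ : ℝ} (h0 : 0 < r₀) :
    IntegrableOn (fun w : ℂ => (‖w‖ ^ 2)⁻¹) {w : ℂ | ‖w‖ ∈ Set.Ioo r₀ r₁} := by
  have hb : ∀ᵐ w ∂(volume.restrict {w : ℂ | ‖w‖ ∈ Set.Ioo r₀ r₁}),
      ‖(‖w‖ ^ 2)⁻¹‖ ≤ (r₀ ^ 2)⁻¹ := by
    refine (ae_restrict_iff' (ann_measurable r₀ r₁)).2 (ae_of_all _ fun w hw => ?_)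
    rw [Real.norm_eq_abs, abs_of_nonneg (by positivity)]
    exact inv_anti₀ (by positivity) (pow_le_pow_left₀ h0.le hw.1.le 2)
  exact Measure.integrableOn_of_bounded (ann_vol_ne_top r₀ r₁)
    ((measurable_norm.pow_const 2).inv).aestronglyMeasurable hb

private lemma ann_integral {r₀ r₁ : ℝ} (h0 : 0 < r₀) (h01 : r₀ < r₁) :
    ∫ w : ℂ in {w : ℂ | ‖w‖ ∈ Set.Ioo r₀ r₁}, (‖w‖ ^ 2)⁻¹ =
      2 * π * (Real.log r₁ - Real.log r₀) := by
  have key := MeasureTheory.integral_fun_norm_addHaar (volume : Measure ℂ)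
    (Set.indicator (Set.Ioo r₀ r₁) (fun y => (y ^ 2)⁻¹))
  have hL : (fun x : ℂ => Set.indicator (Set.Ioo r₀ r₁) (fun y => (y ^ 2)⁻¹) ‖x‖)
      = Set.indicator {w : ℂ | ‖w‖ ∈ Set.Ioo r₀ r₁} (fun w => (‖w‖ ^ 2)⁻¹) := by
    ext x
    by_cases hx : ‖x‖ ∈ Set.Ioo r₀ r₁ <;>
      simp only [Set.indicator_apply, Set.mem_setOf_eq, hx, ↓reduceIte]
  rw [hL, integral_indicator (ann_measurable r₀ r₁)] at key
  rw [key]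
  have hdim : Module.finrank ℝ ℂ = 2 := Complex.finrank_real_complex
  rw [hdim]
  have hball : volume.real (Metric.ball (0:ℂ) 1) = π := by
    rw [measureReal_def, Complex.volume_ball]
    simp [ENNReal.toReal_mul]
  rw [hball]
  have hinner : ∫ y in Set.Ioi (0:ℝ), y ^ (2 - 1) •
      Set.indicator (Set.Ioo r₀ r₁) (fun y => (y ^ 2)⁻¹) y
      = Real.log r₁ - Real.log r₀ := by
    have h1 : ∀ y : ℝ, y ^ (2 - 1) • Set.indicator (Set.Ioo r₀ r₁) (fun y => (y ^ 2)⁻¹) y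
        = Set.indicator (Set.Ioo r₀ r₁) (fun y => y * (y ^ 2)⁻¹) y := by
      intro y
      by_cases hy : y ∈ Set.Ioo r₀ r₁ <;> simp [Set.indicator_apply, hy]
    simp_rw [h1]
    rw [integral_indicator measurableSet_Ioo, Measure.restrict_restrict measurableSet_Ioo]
    have hss : Set.Ioo r₀ r₁ ∩ Set.Ioi 0 = Set.Ioo r₀ r₁ :=
      Set.inter_eq_left.2 (fun y hy => lt_trans h0 hy.1)
    rw [hss]
    have h2 : ∫ y in Set.Ioo r₀ r₁, y * (y ^ 2)⁻¹ = ∫ y in Set.Ioo r₀ r₁, y⁻¹ := by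
      refine setIntegral_congr_fun measurableSet_Ioo fun y hy => ?_
      have : y ≠ 0 := (lt_trans h0 hy.1).ne'
      field_simp
    rw [h2, ← integral_Ioc_eq_integral_Ioo, ← intervalIntegral.integral_of_le h01.le,
      integral_inv (by simp [Set.mem_uIcc]; constructor <;> intro h <;> nlinarith), Real.log_div
        (h0.trans h01).ne' h0.ne']
  rw [hinner]
  simp [smul_eq_mul]
  ring

/-- value of the weighted annulus integral with a constant numerator. -/
private lemma ann_int_value {Q : ℝ} (hQ : 0 < Q) (c t : ℝ) :
    ∫ w : ℂ in {w : ℂ | ‖w‖ ∈ Set.Ioo (rexp ((t - Real.log Q) / 2))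
        (rexp ((t + 1 - Real.log Q) / 2))}, c * (‖w‖ ^ 2 * Q)⁻¹ = c * π / Q := by
  have h0 : 0 < rexp ((t - Real.log Q) / 2) := exp_pos _
  have h01 : rexp ((t - Real.log Q) / 2) < rexp ((t + 1 - Real.log Q) / 2) :=
    exp_lt_exp.2 (by linarith)
  have hfun : (fun w : ℂ => c * (‖w‖ ^ 2 * Q)⁻¹) =
      fun w : ℂ => (c * Q⁻¹) * (‖w‖ ^ 2)⁻¹ := by
    funext w; rw [mul_inv]; ring
  rw [hfun, integral_const_mul, ann_integral h0 h01, Real.log_exp, Real.log_exp]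
  field_simp
  ring

private lemma ann_int_mul {r₀ r₁ Q C : ℝ} (h0 : 0 < r₀) {h : ℂ → ℝ}
    (hh : Continuous h) (hC : ∀ w, |h w| ≤ C) :
    IntegrableOn (fun w : ℂ => h w * (‖w‖ ^ 2 * Q)⁻¹) {w : ℂ | ‖w‖ ∈ Set.Ioo r₀ r₁} := by
  have base : IntegrableOn (fun w : ℂ => (‖w‖ ^ 2 * Q)⁻¹) {w : ℂ | ‖w‖ ∈ Set.Ioo r₀ r₁} := by
    simp_rw [mul_inv]
    exact (ann_integrable h0).mul_const Q⁻¹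
  exact Integrable.bdd_mul base hh.aestronglyMeasurable.restrict
    (ae_of_all _ fun w => by simpa [Real.norm_eq_abs] using hC w)

/-- membership criterion for the band `{t < ψ < t+1}` in terms of an annulus. -/
private lemma log_band_iff {Q t : ℝ} (hQ : 0 < Q) (ht : t ≤ -1) (w : ℂ) :
    (t < Real.log (‖w‖ ^ 2 * Q) ∧ Real.log (‖w‖ ^ 2 * Q) < t + 1) ↔
      ‖w‖ ∈ Set.Ioo (rexp ((t - Real.log Q) / 2)) (rexp ((t + 1 - Real.log Q) / 2)) := by
  by_cases hw : w = 0
  · subst hw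
    simp only [map_zero, norm_zero]
    constructor
    · rintro ⟨h1, h2⟩
      norm_num at h1 h2
      linarith
    · rintro ⟨h1, h2⟩
      exact absurd h1 (not_lt.2 (exp_pos _).le)
  · have habs : 0 < ‖w‖ := norm_pos_iff.mpr hw
    have hx : 0 < ‖w‖ ^ 2 * Q := by positivity
    have hlog : Real.log (‖w‖ ^ 2 * Q) =
        2 * Real.log (‖w‖) + Real.log Q := by
      rw [Real.log_mul (by positivity) hQ.ne', Real.log_pow]
      norm_num
    rw [hlog]
    constructor
    · rintro ⟨h1, h2⟩
      constructor
      · rw [← Real.exp_log habs]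
        exact Real.exp_lt_exp.2 (by linarith)
      · rw [← Real.exp_log habs]
        exact Real.exp_lt_exp.2 (by linarith)
    · rintro ⟨h1, h2⟩
      rw [← Real.exp_log habs] at h1 h2
      have h1' := Real.exp_lt_exp.1 h1
      have h2' := Real.exp_lt_exp.1 h2
      constructor <;> linarith

set_option maxHeartbeats 2000000 in
private lemma aux_tendsto (m N : ℕ) (hN : N ≤ m)
    (a : Fin N → ℝ) (ha : ∀ k, 0 ≤ a k)
    (ψ : (Fin (m + 1) → ℂ) → ℝ)
    (hψ : ∀ z : Fin (m + 1) → ℂ, ψ z =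
      Real.log ((‖z (Fin.last m)‖) ^ 2 *
        ∏ k : Fin N, ‖z (Fin.castLE (hN.trans (Nat.le_succ m)) k)‖ ^ (2 * a k)))
    (g : (Fin m → ℂ) → ℝ)
    (hgsub : tsupport g ⊆ {z' : Fin m → ℂ |
      (∀ i, ‖z' i‖ < 1) ∧ ∀ k : Fin N, z' (Fin.castLE hN k) ≠ 0})
    (gext : (Fin (m + 1) → ℂ) → ℝ)
    (hgext : Continuous gext) (hgextsupp : HasCompactSupport gext)
    (hgextD : ∀ z ∈ tsupport gext, ∀ k : Fin N,
      z (Fin.castLE (hN.trans (Nat.le_succ m)) k) ≠ 0)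
    (hrestr : ∀ z' : Fin m → ℂ, (∀ k : Fin N, z' (Fin.castLE hN k) ≠ 0) →
      gext (fun i : Fin (m + 1) => if h : (i : ℕ) < m then z' ⟨i, h⟩ else 0) = g z') :
    Filter.Tendsto (fun t : ℝ =>
        ∫ z in {z : Fin (m + 1) → ℂ | (∀ i, ‖z i‖ < 1) ∧
            t < ψ z ∧ ψ z < t + 1}, gext z * Real.exp (-ψ z)) atBot
      (𝓝 (∫ z' : Fin m → ℂ,
        π * g z' / ∏ k : Fin N, ‖z' (Fin.castLE hN k)‖ ^ (2 * a k))) := by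
  have hN' : N ≤ m + 1 := hN.trans (Nat.le_succ m)
  set Q : (Fin m → ℂ) → ℝ :=
    fun z' => ∏ k : Fin N, ‖z' (Fin.castLE hN k)‖ ^ (2 * a k) with hQdef
  have hQnn : ∀ z' : Fin m → ℂ, 0 ≤ Q z' := fun z' =>
    Finset.prod_nonneg fun k _ => Real.rpow_nonneg (norm_nonneg _) _
  have hcastLE : ∀ k : Fin N, Fin.castLE hN' k = Fin.castSucc (Fin.castLE hN k) := by
    intro k; ext; simp
  have hsnoc_eval : ∀ (z' : Fin m → ℂ) (w : ℂ) (k : Fin N),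
      (Fin.snoc z' w : Fin (m + 1) → ℂ) (Fin.castLE hN' k) = z' (Fin.castLE hN k) := by
    intro z' w k
    rw [hcastLE k, Fin.snoc_castSucc]
  have hψs : ∀ (z' : Fin m → ℂ) (w : ℂ),
      ψ (Fin.snoc z' w) = Real.log (‖w‖ ^ 2 * Q z') := by
    intro z' w
    rw [hψ]
    congr 1
    rw [Fin.snoc_last]
    congr 1
    exact Finset.prod_congr rfl fun k _ => by rw [hsnoc_eval]
  have hsnoc0 : ∀ z' : Fin m → ℂ,
      (fun i : Fin (m + 1) => if h : (i : ℕ) < m then z' ⟨i, h⟩ else 0) = Fin.snoc z' 0 := by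
    intro z'
    funext i
    induction i using Fin.lastCases with
    | last => simp [Fin.snoc_last]
    | cast j =>
        have hj : ((Fin.castSucc j : Fin (m + 1)) : ℕ) < m := j.isLt
        simp only [hj, dif_pos, Fin.snoc_castSucc]
        have : (⟨((Fin.castSucc j : Fin (m + 1)) : ℕ), hj⟩ : Fin m) = j := Fin.ext (by simp)
        rw [this]
  have hQ0 : ∀ z' : Fin m → ℂ, Q z' = 0 → ∃ k : Fin N, z' (Fin.castLE hN k) = 0 := by
    intro z' h0
    obtain ⟨k, -, hk⟩ := Finset.prod_eq_zero_iff.1 h0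
    refine ⟨k, ?_⟩
    by_cases hak : (2 : ℝ) * a k = 0
    · rw [hak, Real.rpow_zero] at hk
      exact absurd hk one_ne_zero
    · exact norm_eq_zero.1 ((Real.rpow_eq_zero (norm_nonneg _) hak).1 hk)
  have hval : ∀ z' : Fin m → ℂ, gext (Fin.snoc z' 0) = g z' := by
    intro z'
    by_cases hz : ∀ k : Fin N, z' (Fin.castLE hN k) ≠ 0
    · rw [← hrestr z' hz, hsnoc0]
    · push_neg at hz
      obtain ⟨k, hk⟩ := hz
      have h1 : g z' = 0 := by
        by_contra hne
        exact (hgsub (subset_tsupport g (Function.mem_support.2 hne))).2 k hk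
      have h2 : gext (Fin.snoc z' 0) = 0 := by
        by_contra hne
        refine hgextD _ (subset_tsupport gext (Function.mem_support.2 hne)) k ?_
        rw [hsnoc_eval]
        exact hk
      rw [h1, h2]

  -- continuity of Q
  have hQc : Continuous Q := by
    apply continuous_finset_prod
    intro k _
    exact (Real.continuous_rpow_const (by have := ha k; positivity)).comp
      (continuous_norm.comp (continuous_apply _))
  -- measurability of ψ
  have hψf : ψ = fun z => Real.log ((‖z (Fin.last m)‖) ^ 2 *
      ∏ k : Fin N, ‖z (Fin.castLE hN' k)‖ ^ (2 * a k)) := funext hψ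
  have hinnerc : Continuous fun z : Fin (m + 1) → ℂ =>
      (‖z (Fin.last m)‖) ^ 2 *
        ∏ k : Fin N, ‖z (Fin.castLE hN' k)‖ ^ (2 * a k) := by
    apply Continuous.mul
    · exact (continuous_norm.comp (continuous_apply _)).pow 2
    · apply continuous_finset_prod
      intro k _
      exact (Real.continuous_rpow_const (by have := ha k; positivity)).comp
        (continuous_norm.comp (continuous_apply _))
  have hψm : Measurable ψ := by
    rw [hψf]
    exact Real.measurable_log.comp hinnerc.measurable
  -- the family of sets
  set A : ℝ → Set (Fin (m + 1) → ℂ) := fun t =>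
    {z : Fin (m + 1) → ℂ | (∀ i, ‖z i‖ < 1) ∧ t < ψ z ∧ ψ z < t + 1} with hAdef
  have hpolym : MeasurableSet {z : Fin (m + 1) → ℂ | ∀ i, ‖z i‖ < 1} := by
    have : {z : Fin (m + 1) → ℂ | ∀ i, ‖z i‖ < 1} =
        ⋂ i, {z : Fin (m + 1) → ℂ | ‖z i‖ < 1} := by
      ext z; simp [Set.mem_iInter]
    rw [this]
    exact MeasurableSet.iInter fun i => measurableSet_lt
      ((continuous_norm.comp (continuous_apply i)).measurable) measurable_const
  have hAmeas : ∀ t, MeasurableSet (A t) := by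
    intro t
    have : A t = {z : Fin (m + 1) → ℂ | ∀ i, ‖z i‖ < 1} ∩
        ({z | t < ψ z} ∩ {z | ψ z < t + 1}) := by
      ext z; simp [hAdef, and_assoc]
    rw [this]
    exact hpolym.inter ((measurableSet_lt measurable_const hψm).inter
      (measurableSet_lt hψm measurable_const))
  have hpoly_eq : {z : Fin (m + 1) → ℂ | ∀ i, ‖z i‖ < 1} =
      Set.pi Set.univ (fun _ : Fin (m + 1) => Metric.ball (0 : ℂ) 1) := by
    ext z
    simp [Set.mem_pi, Complex.dist_eq]
  have hpoly_ne_top : volume {z : Fin (m + 1) → ℂ | ∀ i, ‖z i‖ < 1} ≠ ⊤ := by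
    rw [hpoly_eq, volume_pi_pi]
    refine (ENNReal.prod_lt_top fun i _ => ?_).ne
    rw [Complex.volume_ball]
    exact ENNReal.mul_lt_top (by simp [ENNReal.pow_lt_top]) ENNReal.coe_lt_top
  -- bound on gext
  obtain ⟨Cg, hCgn⟩ := hgextsupp.exists_bound_of_continuous hgext
  have hCg : ∀ z, |gext z| ≤ Cg := fun z => by simpa [Real.norm_eq_abs] using hCgn z
  have hCg0 : 0 ≤ Cg := le_trans (abs_nonneg _) (hCg fun _ => 0)
  -- projection to the first m coordinates
  set proj : (Fin (m + 1) → ℂ) → Fin m → ℂ := fun z j => z (Fin.castSucc j) with hprojdef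
  have hprojc : Continuous proj := continuous_pi fun j => continuous_apply _
  have hprojsnoc : ∀ (z' : Fin m → ℂ) (w : ℂ), proj (Fin.snoc z' w) = z' := by
    intro z' w; funext j; simp [hprojdef, Fin.snoc_castSucc]
  set K' : Set (Fin m → ℂ) := proj '' tsupport gext with hK'def
  have hK'c : IsCompact K' := hgextsupp.image hprojc
  have hK'm : MeasurableSet K' := hK'c.isClosed.measurableSet
  have hQprojpos : ∀ z ∈ tsupport gext, 0 < Q (proj z) := by
    intro z hz
    refine Finset.prod_pos fun k _ => Real.rpow_pos_of_pos ?_ _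
    have : proj z (Fin.castLE hN k) = z (Fin.castLE hN' k) := by
      rw [hcastLE k]
    rw [this]
    exact norm_pos_iff.mpr (hgextD z hz k)
  obtain ⟨q, hq0, hq⟩ : ∃ q : ℝ, 0 < q ∧ ∀ z' ∈ K', q ≤ Q z' := by
    rcases (tsupport gext).eq_empty_or_nonempty with he | hne
    · exact ⟨1, one_pos, by simp [hK'def, he]⟩
    · obtain ⟨z₀, hz₀K, hz₀min⟩ := hgextsupp.exists_isMinOn hne
        (hQc.comp hprojc).continuousOn
      refine ⟨Q (proj z₀), hQprojpos z₀ hz₀K, ?_⟩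
      rintro z' ⟨z, hz, rfl⟩
      exact hz₀min hz
  have hmem : ∀ (z' : Fin m → ℂ) (w : ℂ), gext (Fin.snoc z' w) ≠ 0 →
      z' ∈ K' ∧ q ≤ Q z' := by
    intro z' w hne
    have hzin : Fin.snoc z' w ∈ tsupport gext :=
      subset_tsupport gext (Function.mem_support.2 hne)
    have : z' ∈ K' := ⟨Fin.snoc z' w, hzin, hprojsnoc z' w⟩
    exact ⟨this, hq _ this⟩

  -- the integrand
  set f : ℝ → (Fin (m + 1) → ℂ) → ℝ :=
    fun t => (A t).indicator (fun z => gext z * Real.exp (-ψ z)) with hfdef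
  have hintc : AEStronglyMeasurable (fun z : Fin (m + 1) → ℂ => gext z * Real.exp (-ψ z))
      (volume : Measure (Fin (m + 1) → ℂ)) :=
    (hgext.measurable.mul (Real.measurable_exp.comp hψm.neg)).aestronglyMeasurable
  have hIntOn : ∀ t, IntegrableOn (fun z => gext z * Real.exp (-ψ z)) (A t) volume := by
    intro t
    refine Measure.integrableOn_of_bounded (M := Cg * Real.exp (-t))
      (ne_top_of_le_ne_top hpoly_ne_top (measure_mono fun z hz => hz.1)) hintc ?_
    refine (ae_restrict_iff' (hAmeas t)).2 (ae_of_all _ fun z hz => ?_)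
    rw [Real.norm_eq_abs, abs_mul, abs_of_pos (Real.exp_pos _)]
    exact mul_le_mul (hCg z) (Real.exp_le_exp.2 (by linarith [hz.2.1]))
      (Real.exp_pos _).le hCg0
  have hIntf : ∀ t, Integrable (f t) volume := fun t =>
    (integrable_indicator_iff (hAmeas t)).2 (hIntOn t)
  -- transport to the product
  set e := MeasurableEquiv.piFinSuccAbove (fun _ : Fin (m + 1) => ℂ) (Fin.last m) with hedef
  have hesymm : ∀ p : ℂ × (Fin m → ℂ), e.symm p = Fin.snoc p.2 p.1 := by
    intro p
    simp [hedef, MeasurableEquiv.piFinSuccAbove_symm_apply, Fin.insertNthEquiv,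
      Fin.insertNth_last']
  have hmp := (measurePreserving_piFinSuccAbove
    (fun _ : Fin (m + 1) => (volume : Measure ℂ)) (Fin.last m)).symm
  have hIntProd : ∀ t, Integrable (fun p : ℂ × (Fin m → ℂ) => f t (Fin.snoc p.2 p.1))
      (Measure.prod volume (Measure.pi fun _ => volume)) := by
    intro t
    have h1 : Integrable (f t) (Measure.pi fun _ : Fin (m + 1) => (volume : Measure ℂ)) := by
      rw [← volume_pi]; exact hIntf t
    have h2 := (hmp.integrable_comp_emb (MeasurableEquiv.measurableEmbedding _)).2 h1
    have h3 : (f t ∘ e.symm) = fun p : ℂ × (Fin m → ℂ) => f t (Fin.snoc p.2 p.1) := by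
      funext p; simp [Function.comp, hesymm p]
    rwa [h3] at h2
  have hFub : ∀ t, ∫ z, f t z = ∫ z' : Fin m → ℂ, ∫ w : ℂ, f t (Fin.snoc z' w) := by
    intro t
    have h0 : ∫ z, f t z = ∫ z, f t z ∂(Measure.pi fun _ : Fin (m + 1) => (volume : Measure ℂ)) := by
      rw [← volume_pi]
    have h1 := hmp.integral_comp (MeasurableEquiv.measurableEmbedding _) (f t)
    have h2 := MeasureTheory.integral_prod_symm _ (hIntProd t)
    have h3 : (fun p : ℂ × (Fin m → ℂ) => f t (e.symm p))
        = fun p : ℂ × (Fin m → ℂ) => f t (Fin.snoc p.2 p.1) := by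
      funext p; rw [hesymm p]
    rw [h0, ← h1, h3, h2, ← volume_pi]

  -- the inner integral
  set innerI : ℝ → (Fin m → ℂ) → ℝ := fun t z' => ∫ w : ℂ, f t (Fin.snoc z' w) with hinnerIdef
  -- annulus radii
  set R0 : ℝ → ℝ → ℝ := fun Qv t => rexp ((t - Real.log Qv) / 2) with hR0def
  set R1 : ℝ → ℝ → ℝ := fun Qv t => rexp ((t + 1 - Real.log Qv) / 2) with hR1def
  -- band description within A t
  have hband : ∀ (z' : Fin m → ℂ) (w : ℂ) (t : ℝ), 0 < Q z' → t ≤ -1 →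
      ((t < ψ (Fin.snoc z' w) ∧ ψ (Fin.snoc z' w) < t + 1) ↔
        ‖w‖ ∈ Set.Ioo (R0 (Q z') t) (R1 (Q z') t)) := by
    intro z' w t hQ ht
    rw [hψs]
    exact log_band_iff hQ ht w
  -- pointwise bound for the inner integrand
  have hptbound : ∀ (t : ℝ), t ≤ -1 → ∀ (z' : Fin m → ℂ), 0 < Q z' → ∀ w : ℂ,
      ‖f t (Fin.snoc z' w)‖ ≤ Set.indicator {w : ℂ | ‖w‖ ∈ Set.Ioo (R0 (Q z') t) (R1 (Q z') t)}
        (fun w => Cg * (‖w‖ ^ 2 * Q z')⁻¹) w := by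
    intro t ht z' hQ w
    have hindnn : ∀ v : ℂ, 0 ≤ Set.indicator {w : ℂ | ‖w‖ ∈ Set.Ioo (R0 (Q z') t) (R1 (Q z') t)}
        (fun w => Cg * (‖w‖ ^ 2 * Q z')⁻¹) v :=
      fun v => Set.indicator_nonneg (fun x _ => by positivity) v
    by_cases hA : Fin.snoc z' w ∈ A t
    · have hw : ‖w‖ ∈ Set.Ioo (R0 (Q z') t) (R1 (Q z') t) :=
        (hband z' w t hQ ht).1 hA.2
      have hwpos : 0 < ‖w‖ := lt_trans (exp_pos _) hw.1
      have habs : (0:ℝ) < ‖w‖ ^ 2 * Q z' := by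
        positivity
      have hfval : f t (Fin.snoc z' w) =
          gext (Fin.snoc z' w) * (‖w‖ ^ 2 * Q z')⁻¹ := by
        rw [hfdef]
        simp only [Set.indicator_of_mem hA]
        rw [hψs, Real.exp_neg, Real.exp_log habs]
      have hwmem : w ∈ {w : ℂ | ‖w‖ ∈ Set.Ioo (R0 (Q z') t) (R1 (Q z') t)} := hw
      have hinv_nn : (0:ℝ) ≤ (‖w‖ ^ 2 * Q z')⁻¹ := by positivity
      rw [hfval, Set.indicator_of_mem hwmem]
      rw [Real.norm_eq_abs, abs_mul, abs_of_nonneg hinv_nn]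
      exact mul_le_mul_of_nonneg_right (hCg _) hinv_nn
    · rw [hfdef]
      simp only [Set.indicator_of_notMem hA, norm_zero]
      exact hindnn w
  -- the dominated-convergence bound
  set bound : (Fin m → ℂ) → ℝ := Set.indicator K' (fun _ => Cg * π / q) with hbounddef
  have hbound_nonneg : ∀ z', 0 ≤ bound z' :=
    fun z' => Set.indicator_nonneg (fun x _ => by positivity) z'
  have hbound_int : Integrable bound volume :=
    (integrable_indicator_iff hK'm).2 (integrableOn_const hK'c.measure_lt_top.ne)
  have h_bound : ∀ᶠ t in (atBot : Filter ℝ), ∀ᵐ z' : Fin m → ℂ, ‖innerI t z'‖ ≤ bound z' := by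
    filter_upwards [eventually_le_atBot (-1 : ℝ)] with t ht
    refine ae_of_all _ fun z' => ?_
    by_cases hz : ∀ w : ℂ, gext (Fin.snoc z' w) = 0
    · have : ∀ w : ℂ, f t (Fin.snoc z' w) = 0 := by
        intro w
        rw [hfdef]
        by_cases hA : Fin.snoc z' w ∈ A t
        · simp [Set.indicator_of_mem hA, hz w]
        · simp [Set.indicator_of_notMem hA]
      rw [hinnerIdef]
      simp only [this, integral_zero, norm_zero]
      exact hbound_nonneg z'
    · push_neg at hz
      obtain ⟨w₀, hw₀⟩ := hz
      obtain ⟨hK, hqQ⟩ := hmem z' w₀ hw₀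
      have hQ : 0 < Q z' := lt_of_lt_of_le hq0 hqQ
      have hIbnd : Integrable (Set.indicator {w : ℂ | ‖w‖ ∈ Set.Ioo (R0 (Q z') t) (R1 (Q z') t)}
          (fun w => Cg * (‖w‖ ^ 2 * Q z')⁻¹)) volume :=
        (integrable_indicator_iff (ann_measurable _ _)).2
          (ann_int_mul (exp_pos _) continuous_const (fun w => le_refl |Cg|))
      have h1 : ‖innerI t z'‖ ≤ ∫ w : ℂ, Set.indicator
          {w : ℂ | ‖w‖ ∈ Set.Ioo (R0 (Q z') t) (R1 (Q z') t)}
          (fun w => Cg * (‖w‖ ^ 2 * Q z')⁻¹) w :=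
        norm_integral_le_of_norm_le hIbnd (ae_of_all _ (hptbound t ht z' hQ))
      have h2 : ∫ w : ℂ, Set.indicator
          {w : ℂ | ‖w‖ ∈ Set.Ioo (R0 (Q z') t) (R1 (Q z') t)}
          (fun w => Cg * (‖w‖ ^ 2 * Q z')⁻¹) w = Cg * π / Q z' := by
        rw [integral_indicator (ann_measurable _ _)]
        exact ann_int_value hQ Cg t
      rw [hbounddef]
      rw [Set.indicator_of_mem hK]
      refine le_trans h1 ?_
      rw [h2]
      exact div_le_div_of_nonneg_left (by positivity) hq0 hqQ
  -- a.e., no coordinate has unit modulus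
  have hsphere : ∀ᵐ z' : Fin m → ℂ, ∀ i, ‖z' i‖ ≠ 1 := by
    rw [MeasureTheory.ae_all_iff]
    intro i
    rw [ae_iff]
    have hset : {z' : Fin m → ℂ | ¬‖z' i‖ ≠ 1} =
        (fun z' : Fin m → ℂ => z' i) ⁻¹' (Metric.sphere (0 : ℂ) 1) := by
      ext z'
      simp [Complex.dist_eq]
    rw [hset, volume_pi]
    exact Measure.pi_eval_preimage_null _ (Measure.addHaar_sphere volume 0 1)
  -- pointwise convergence
  have h_lim : ∀ᵐ z' : Fin m → ℂ, Tendsto (fun t => innerI t z') atBot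
      (𝓝 (π * g z' / Q z')) := by
    filter_upwards [hsphere] with z' hz1
    by_cases hall : ∀ i, ‖z' i‖ < 1
    · by_cases hQpos : 0 < Q z'
      · -- main case
        have hc : Continuous fun w : ℂ => gext (Fin.snoc z' w) := by
          refine hgext.comp (continuous_pi fun i => ?_)
          induction i using Fin.lastCases with
          | last => simpa only [Fin.snoc_last] using continuous_id'
          | cast j => simpa only [Fin.snoc_castSucc] using continuous_const
        rw [Metric.tendsto_nhds]
        intro ε hε
        set ε' : ℝ := ε * Q z' / (2 * π) with hε'def
        have hπ : (0:ℝ) < π := Real.pi_pos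
        have hε'0 : 0 < ε' := by rw [hε'def]; positivity
        obtain ⟨δ, hδ0, hδ⟩ := Metric.continuousAt_iff.1 (hc.continuousAt (x := 0)) ε' hε'0
        filter_upwards [eventually_le_atBot (min (-1 : ℝ)
          (min (Real.log (Q z') - 1) (2 * Real.log δ + Real.log (Q z') - 1)))] with t ht
        have ht1 : t ≤ -1 := le_trans ht (min_le_left _ _)
        have ht2 : t + 1 ≤ Real.log (Q z') := by
          have := le_trans ht (le_trans (min_le_right _ _) (min_le_left _ _)); linarith
        have ht3 : t + 1 - Real.log (Q z') ≤ 2 * Real.log δ := by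
          have := le_trans ht (le_trans (min_le_right _ _) (min_le_right _ _)); linarith
        have hR0pos : 0 < R0 (Q z') t := exp_pos _
        have hR1le : R1 (Q z') t ≤ δ := by
          rw [hR1def]
          calc rexp ((t + 1 - Real.log (Q z')) / 2) ≤ rexp (Real.log δ) :=
                exp_le_exp.2 (by linarith)
            _ = δ := Real.exp_log hδ0
        have hmemA : ∀ w : ℂ, Fin.snoc z' w ∈ A t ↔
            ‖w‖ ∈ Set.Ioo (R0 (Q z') t) (R1 (Q z') t) := by
          intro w
          constructor
          · intro hA; exact (hband z' w t hQpos ht1).1 hA.2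
          · intro hw
            refine ⟨?_, (hband z' w t hQpos ht1).2 hw⟩
            intro i
            induction i using Fin.lastCases with
            | last =>
                rw [Fin.snoc_last]
                refine lt_of_lt_of_le hw.2 ?_
                rw [hR1def]
                calc rexp ((t + 1 - Real.log (Q z')) / 2) ≤ rexp 0 :=
                      exp_le_exp.2 (by linarith)
                  _ = 1 := Real.exp_zero
            | cast j => rw [Fin.snoc_castSucc]; exact hall j
        have hval1 : innerI t z' =
            ∫ w in {w : ℂ | ‖w‖ ∈ Set.Ioo (R0 (Q z') t) (R1 (Q z') t)},
              gext (Fin.snoc z' w) * (‖w‖ ^ 2 * Q z')⁻¹ := by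
          rw [hinnerIdef, ← integral_indicator (ann_measurable _ _)]
          refine integral_congr_ae (ae_of_all _ fun w => ?_)
          by_cases hw : ‖w‖ ∈ Set.Ioo (R0 (Q z') t) (R1 (Q z') t)
          · have hwA : Fin.snoc z' w ∈ A t := (hmemA w).2 hw
            have hwpos : 0 < ‖w‖ := lt_trans hR0pos hw.1
            have habs : (0:ℝ) < ‖w‖ ^ 2 * Q z' := by
              positivity
            have hwmem : w ∈ {w : ℂ | ‖w‖ ∈ Set.Ioo (R0 (Q z') t) (R1 (Q z') t)} := hw
            rw [hfdef]
            simp only [Set.indicator_of_mem hwA, Set.indicator_of_mem hwmem]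
            rw [hψs, Real.exp_neg, Real.exp_log habs]
          · have hwA : Fin.snoc z' w ∉ A t := fun h => hw ((hmemA w).1 h)
            have hwmem' : w ∉ {w : ℂ | ‖w‖ ∈ Set.Ioo (R0 (Q z') t) (R1 (Q z') t)} := hw
            rw [hfdef]
            simp only [Set.indicator_of_notMem hwA, Set.indicator_of_notMem hwmem']
        have hIa : IntegrableOn (fun w : ℂ => gext (Fin.snoc z' w) * (‖w‖ ^ 2 * Q z')⁻¹)
            {w : ℂ | ‖w‖ ∈ Set.Ioo (R0 (Q z') t) (R1 (Q z') t)} volume :=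
          ann_int_mul hR0pos hc (fun w => hCg _)
        have hIb : IntegrableOn (fun w : ℂ => gext (Fin.snoc z' 0) * (‖w‖ ^ 2 * Q z')⁻¹)
            {w : ℂ | ‖w‖ ∈ Set.Ioo (R0 (Q z') t) (R1 (Q z') t)} volume :=
          ann_int_mul hR0pos continuous_const (fun w => le_refl |gext (Fin.snoc z' 0)|)
        have htargetval : π * g z' / Q z' =
            ∫ w in {w : ℂ | ‖w‖ ∈ Set.Ioo (R0 (Q z') t) (R1 (Q z') t)},
              gext (Fin.snoc z' 0) * (‖w‖ ^ 2 * Q z')⁻¹ := by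
          rw [ann_int_value hQpos (gext (Fin.snoc z' 0)) t, hval z']
          ring
        rw [Real.dist_eq, hval1, htargetval, ← integral_sub hIa hIb, ← Real.norm_eq_abs]
        have hdiff : ∀ w ∈ {w : ℂ | ‖w‖ ∈ Set.Ioo (R0 (Q z') t) (R1 (Q z') t)},
            ‖gext (Fin.snoc z' w) * (‖w‖ ^ 2 * Q z')⁻¹ -
              gext (Fin.snoc z' 0) * (‖w‖ ^ 2 * Q z')⁻¹‖ ≤ ε' * (‖w‖ ^ 2 * Q z')⁻¹ := by
          intro w hw
          have hwpos : 0 < ‖w‖ := lt_trans hR0pos hw.1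
          have hinv_nn : (0:ℝ) ≤ (‖w‖ ^ 2 * Q z')⁻¹ := by positivity
          rw [← sub_mul, Real.norm_eq_abs, abs_mul, abs_of_nonneg hinv_nn]
          refine mul_le_mul_of_nonneg_right ?_ hinv_nn
          have hdist : dist w 0 < δ := by
            rw [Complex.dist_eq, sub_zero]
            exact lt_of_lt_of_le hw.2 hR1le
          have h5 := hδ hdist
          rw [Real.dist_eq] at h5
          exact h5.le
        have hIc : IntegrableOn (fun w : ℂ => ε' * (‖w‖ ^ 2 * Q z')⁻¹)
            {w : ℂ | ‖w‖ ∈ Set.Ioo (R0 (Q z') t) (R1 (Q z') t)} volume :=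
          ann_int_mul hR0pos continuous_const (fun w => le_refl |ε'|)
        have hle := norm_integral_le_of_norm_le hIc
          ((ae_restrict_iff' (ann_measurable _ _)).2 (ae_of_all _ hdiff))
        rw [ann_int_value hQpos ε' t] at hle
        have heq2 : ε' * π / Q z' = ε / 2 := by
          rw [hε'def]; field_simp
        rw [heq2] at hle
        exact lt_of_le_of_lt hle (by linarith)

      · -- Q z' = 0
        have hQz : Q z' = 0 := le_antisymm (not_lt.1 hQpos) (hQnn z')
        have hg0 : g z' = 0 := by
          obtain ⟨k, hk⟩ := hQ0 z' hQz
          by_contra hne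
          exact (hgsub (subset_tsupport g (Function.mem_support.2 hne))).2 k hk
        have htarget : π * g z' / Q z' = 0 := by rw [hg0, mul_zero, zero_div]
        rw [htarget]
        have hev : ∀ᶠ t in (atBot : Filter ℝ), innerI t z' = 0 := by
          filter_upwards [eventually_le_atBot (-1 : ℝ)] with t ht
          have : ∀ w : ℂ, f t (Fin.snoc z' w) = 0 := by
            intro w
            rw [hfdef]
            refine Set.indicator_of_notMem ?_ _
            intro hA
            have h2 := hA.2
            rw [hψs, hQz, mul_zero, Real.log_zero] at h2
            linarith [h2.1, h2.2]
          rw [hinnerIdef]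
          simp only [this, integral_zero]
        exact Tendsto.congr' (hev.mono fun t h => h.symm) tendsto_const_nhds
    · -- some coordinate has modulus > 1
      have hg0 : g z' = 0 := by
        by_contra hne
        exact hall fun i => (hgsub (subset_tsupport g (Function.mem_support.2 hne))).1 i
      have htarget : π * g z' / Q z' = 0 := by rw [hg0, mul_zero, zero_div]
      rw [htarget]
      push_neg at hall
      obtain ⟨i, hi⟩ := hall
      have : ∀ t, innerI t z' = 0 := by
        intro t
        have hnm : ∀ w : ℂ, f t (Fin.snoc z' w) = 0 := by
          intro w
          rw [hfdef]
          refine Set.indicator_of_notMem ?_ _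
          intro hA
          have := hA.1 (Fin.castSucc i)
          rw [Fin.snoc_castSucc] at this
          exact hi.not_gt this
        rw [hinnerIdef]
        simp only [hnm, integral_zero]
      exact Tendsto.congr (fun t => (this t).symm) tendsto_const_nhds
  -- measurability of the inner integrals
  have h_meas : ∀ᶠ t in (atBot : Filter ℝ), AEStronglyMeasurable (fun z' => innerI t z')
      (volume : Measure (Fin m → ℂ)) := by
    refine Eventually.of_forall fun t => ?_
    have := ((hIntProd t).integral_prod_right).aestronglyMeasurable
    rwa [← volume_pi] at this
  -- dominated convergence
  have hdct := tendsto_integral_filter_of_dominated_convergence bound h_meas h_bound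
    hbound_int h_lim
  -- conclusion
  refine Tendsto.congr (fun t => ?_) hdct
  rw [← integral_indicator (hAmeas t)]
  exact (hFub t).symm



/-- Step 1 in the proof of Lemma 3.4 of the paper. -/
theorem ohsawa_measure_snc_model_extension_independent
    (n N : ℕ) (hn : 1 ≤ n) (hN : N ≤ n - 1)
    (a : Fin N → ℝ) (ha : ∀ k, 0 ≤ a k)
    (ψ : (Fin n → ℂ) → ℝ)
    (hψ : ∀ z : Fin n → ℂ, ψ z =
      Real.log ((‖z ⟨n - 1, by omega⟩‖) ^ 2 *
        ∏ k : Fin N, ‖z (Fin.castLE (hN.trans (Nat.sub_le n 1)) k)‖ ^ (2 * a k)))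
    (g : (Fin (n - 1) → ℂ) → ℝ)
    (hg : Continuous g) (hgsupp : HasCompactSupport g)
    (hgsub : tsupport g ⊆ {z' : Fin (n - 1) → ℂ |
      (∀ i, ‖z' i‖ < 1) ∧ ∀ k : Fin N, z' (Fin.castLE hN k) ≠ 0})
    (gext₁ gext₂ : (Fin n → ℂ) → ℝ)
    (hgext₁ : Continuous gext₁) (hgextsupp₁ : HasCompactSupport gext₁)
    (hgextD₁ : ∀ z ∈ tsupport gext₁, ∀ k : Fin N,
      z (Fin.castLE (hN.trans (Nat.sub_le n 1)) k) ≠ 0)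
    (hrestr₁ : ∀ z' : Fin (n - 1) → ℂ, (∀ k : Fin N, z' (Fin.castLE hN k) ≠ 0) →
      gext₁ (fun i : Fin n => if h : (i : ℕ) < n - 1 then z' ⟨i, h⟩ else 0) = g z')
    (hgext₂ : Continuous gext₂) (hgextsupp₂ : HasCompactSupport gext₂)
    (hgextD₂ : ∀ z ∈ tsupport gext₂, ∀ k : Fin N,
      z (Fin.castLE (hN.trans (Nat.sub_le n 1)) k) ≠ 0)
    (hrestr₂ : ∀ z' : Fin (n - 1) → ℂ, (∀ k : Fin N, z' (Fin.castLE hN k) ≠ 0) →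
      gext₂ (fun i : Fin n => if h : (i : ℕ) < n - 1 then z' ⟨i, h⟩ else 0) = g z') :
    limsup (fun t : ℝ =>
        ∫ z in {z : Fin n → ℂ | (∀ i, ‖z i‖ < 1) ∧
            t < ψ z ∧ ψ z < t + 1}, gext₁ z * Real.exp (-ψ z)) atBot
      ≤ liminf (fun t : ℝ =>
        ∫ z in {z : Fin n → ℂ | (∀ i, ‖z i‖ < 1) ∧
            t < ψ z ∧ ψ z < t + 1}, gext₂ z * Real.exp (-ψ z)) atBot := by
  obtain _ | m := n
  · omega
  have h1 := aux_tendsto m N hN a ha ψ hψ g hgsub gext₁ hgext₁ hgextsupp₁ hgextD₁ hrestr₁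
  have h2 := aux_tendsto m N hN a ha ψ hψ g hgsub gext₂ hgext₂ hgextsupp₂ hgextD₂ hrestr₂
  rw [h1.limsup_eq, h2.liminf_eq]
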